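/- If gcd(m+1, n+1) > 1, then the complete tripartite graph K_{1,m,n} admits no interval edge-coloring. -/

import Mathlib

/-- The set of colors on edges incident to `v` (the spectrum of `v`). -/
def Spectrum {V : Type*} (G : SimpleGraph V) (c : G.edgeSet → ℕ) (v : V) : Set ℕ :=
  {k | ∃ e : G.edgeSet, v ∈ (e : Sym2 V) ∧ c e = k}

/-- `c` is an interval `t`-coloring of `G`: a proper edge-coloring with colors
`1,…,t`, all colors used, and each vertex's spectrum an interval of integers. -/
def IsIntervalColoring {V : Type*} (G : SimpleGraph V) (t : ℕ) (c : G.edgeSet → ℕ) : Prop :=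
  (∀ e, 1 ≤ c e ∧ c e ≤ t) ∧
  (∀ k, 1 ≤ k → k ≤ t → ∃ e, c e = k) ∧
  (∀ e₁ e₂ : G.edgeSet, e₁ ≠ e₂ → (∃ v, v ∈ (e₁ : Sym2 V) ∧ v ∈ (e₂ : Sym2 V)) →
    c e₁ ≠ c e₂) ∧
  (∀ v : V, ∃ a b : ℕ, Spectrum G c v = Set.Icc a b)

/-- Which part of the tripartition a vertex belongs to. -/
def tripart (m n : ℕ) : Fin 1 ⊕ Fin m ⊕ Fin n → Fin 3
  | .inl _ => 0
  | .inr (.inl _) => 1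
  | .inr (.inr _) => 2

/-- The complete tripartite graph `K_{1,m,n}`. -/
def K1mn (m n : ℕ) : SimpleGraph (Fin 1 ⊕ Fin m ⊕ Fin n) where
  Adj a b := tripart m n a ≠ tripart m n b
  symm := ⟨fun _ _ h => h.symm⟩
  loopless := ⟨fun _ h => h rfl⟩


instance K1mnDec (m n : ℕ) : DecidableRel (K1mn m n).Adj :=
  fun a b => decidable_of_iff (tripart m n a ≠ tripart m n b) Iff.rfl

lemma K1mn_adj (m n : ℕ) (a b : Fin 1 ⊕ Fin m ⊕ Fin n) :
    (K1mn m n).Adj a b ↔ tripart m n a ≠ tripart m n b := Iff.rfl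

lemma K1mn_degree (m n : ℕ) (v : Fin 1 ⊕ Fin m ⊕ Fin n) :
    (K1mn m n).degree v = (match v with
      | .inl _ => m + n
      | .inr (.inl _) => 1 + n
      | .inr (.inr _) => 1 + m) := by
  rw [← SimpleGraph.card_neighborFinset_eq_degree, SimpleGraph.neighborFinset_eq_filter]
  rcases v with i | x | y <;>
    simp [K1mn_adj, tripart, Finset.card_filter, Fintype.sum_sum_type, Fin.ext_iff]

lemma I_card (m n : ℕ) (v : Fin 1 ⊕ Fin m ⊕ Fin n) :
    (Finset.univ.filter
        (fun e : (K1mn m n).edgeSet => v ∈ (e : Sym2 (Fin 1 ⊕ Fin m ⊕ Fin n)))).card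
      = (K1mn m n).degree v := by
  classical
  rw [← Fintype.card_subtype, ← SimpleGraph.card_incidenceSet_eq_degree]
  exact Fintype.card_congr
    ⟨fun x => ⟨x.1.1, x.1.2, x.2⟩, fun x => ⟨⟨x.1, x.2.1⟩, x.2.2⟩,
      fun x => rfl, fun x => rfl⟩

lemma two_mem (m n : ℕ) (e : (K1mn m n).edgeSet) :
    (Finset.univ.filter (fun v => v ∈ (e : Sym2 (Fin 1 ⊕ Fin m ⊕ Fin n)))).card = 2 := by
  obtain ⟨e, he⟩ := e
  induction e with
  | h x y =>
    have hadj : (K1mn m n).Adj x y := (SimpleGraph.mem_edgeSet _).mp he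
    have hxy : x ≠ y := (K1mn m n).ne_of_adj hadj
    have hfe : Finset.univ.filter (fun v => v ∈ s(x, y)) = {x, y} := by
      ext v; simp [Sym2.mem_iff]
    rw [hfe, Finset.card_insert_of_notMem (by simpa using hxy), Finset.card_singleton]

lemma handshake (m n : ℕ) (P : (K1mn m n).edgeSet → Prop) [DecidablePred P] :
    ∑ v : Fin 1 ⊕ Fin m ⊕ Fin n,
        (Finset.univ.filter
          (fun e : (K1mn m n).edgeSet => v ∈ (e : Sym2 (Fin 1 ⊕ Fin m ⊕ Fin n)) ∧ P e)).card
      = 2 * (Finset.univ.filter P).card := by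
  classical
  simp only [Finset.card_filter]
  rw [Finset.sum_comm]
  have hstep : ∀ e : (K1mn m n).edgeSet,
      (∑ v : Fin 1 ⊕ Fin m ⊕ Fin n,
        if v ∈ (e : Sym2 (Fin 1 ⊕ Fin m ⊕ Fin n)) ∧ P e then 1 else 0)
      = if P e then 2 else 0 := by
    intro e
    by_cases hP : P e
    · simp only [hP, and_true, if_true]
      have := two_mem m n e
      rw [Finset.card_filter] at this
      rw [this]
    · simp [hP]
  rw [Finset.sum_congr rfl (fun e _ => hstep e)]
  rw [Finset.mul_sum]
  exact Finset.sum_congr rfl fun e _ => by by_cases h : P e <;> simp [h]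

lemma vertex_count (m n : ℕ) (c : (K1mn m n).edgeSet → ℕ)
    (hproper : ∀ e₁ e₂ : (K1mn m n).edgeSet, e₁ ≠ e₂ →
      (∃ v, v ∈ (e₁ : Sym2 (Fin 1 ⊕ Fin m ⊕ Fin n)) ∧ v ∈ (e₂ : Sym2 (Fin 1 ⊕ Fin m ⊕ Fin n))) →
      c e₁ ≠ c e₂)
    (v : Fin 1 ⊕ Fin m ⊕ Fin n) (a b : ℕ)
    (hs : Spectrum (K1mn m n) c v = Set.Icc a b) :
    ∃ a' : ℕ, ∀ d r : ℕ,
      (Finset.univ.filter (fun e : (K1mn m n).edgeSet =>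
          v ∈ (e : Sym2 (Fin 1 ⊕ Fin m ⊕ Fin n)) ∧ c e % d = r)).card
        = ((Finset.Ico a' (a' + (K1mn m n).degree v)).filter (fun k => k % d = r)).card := by
  classical
  set I := Finset.univ.filter
    (fun e : (K1mn m n).edgeSet => v ∈ (e : Sym2 (Fin 1 ⊕ Fin m ⊕ Fin n))) with hI
  have hinj : Set.InjOn c I := by
    intro e₁ h₁ e₂ h₂ hc
    by_contra hne
    exact hproper e₁ e₂ hne
      ⟨v, (Finset.mem_filter.mp h₁).2, (Finset.mem_filter.mp h₂).2⟩ hc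
  have himage : I.image c = Finset.Icc a b := by
    apply Finset.coe_injective
    rw [Finset.coe_image, Finset.coe_Icc, ← hs]
    ext k
    simp only [Set.mem_image, Finset.mem_coe, hI, Finset.mem_filter, Finset.mem_univ, true_and,
      Spectrum, Set.mem_setOf_eq]
  have hcard : (Finset.Icc a b).card = (K1mn m n).degree v := by
    rw [← himage, Finset.card_image_of_injOn hinj, hI, I_card]
  have hIcc : Finset.Icc a b = Finset.Ico a (a + (K1mn m n).degree v) := by
    rcases le_or_gt a b with hab | hab
    · rw [← Finset.Ico_add_one_right_eq_Icc]
      congr 1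
      rw [Nat.card_Icc] at hcard
      omega
    · rw [Nat.card_Icc] at hcard
      rw [Finset.Icc_eq_empty (by omega)]
      have h0 : (K1mn m n).degree v = 0 := by omega
      rw [h0]
      simp
  refine ⟨a, fun d r => ?_⟩
  have hfilter : Finset.univ.filter (fun e : (K1mn m n).edgeSet =>
      v ∈ (e : Sym2 (Fin 1 ⊕ Fin m ⊕ Fin n)) ∧ c e % d = r)
      = I.filter (fun e => c e % d = r) := by
    rw [hI, Finset.filter_filter]
  rw [hfilter, ← hIcc, ← himage, Finset.filter_image,
    Finset.card_image_of_injOn (hinj.mono (Finset.coe_subset.mpr (Finset.filter_subset _ _)))]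

lemma window_inj {d a k k' : ℕ} (h1 : a ≤ k) (h2 : k < a + d)
    (h1' : a ≤ k') (h2' : k' < a + d) (h : k % d = k' % d) : k = k' := by
  rcases le_total k k' with hle | hle
  · have hdvd := (Nat.modEq_iff_dvd' hle).mp h
    rcases Nat.eq_zero_or_pos (k' - k) with h0 | hp
    · omega
    · have := Nat.le_of_dvd hp hdvd; omega
  · have hdvd := (Nat.modEq_iff_dvd' hle).mp h.symm
    rcases Nat.eq_zero_or_pos (k - k') with h0 | hp
    · omega
    · have := Nat.le_of_dvd hp hdvd; omega

lemma window_exists (d a r : ℕ) (hr : r < d) :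
    ∃ k, a ≤ k ∧ k < a + d ∧ k % d = r := by
  have hma := Nat.mod_add_div a d
  have hlt := Nat.mod_lt a (show 0 < d by omega)
  by_cases h : a % d ≤ r
  · refine ⟨d * (a / d) + r, by omega, by omega, ?_⟩
    rw [Nat.mul_add_mod]; exact Nat.mod_eq_of_lt hr
  · refine ⟨d * (a / d + 1) + r, by push_cast [Nat.mul_add] at *; omega, by
      push_cast [Nat.mul_add] at *; omega, ?_⟩
    rw [Nat.mul_add_mod]; exact Nat.mod_eq_of_lt hr

lemma window_filter_card (d a r : ℕ) (hr : r < d) :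
    ((Finset.Ico a (a + d)).filter (fun k => k % d = r)).card = 1 := by
  obtain ⟨k, hk1, hk2, hk3⟩ := window_exists d a r hr
  rw [Finset.card_eq_one]
  refine ⟨k, ?_⟩
  ext x
  simp only [Finset.mem_filter, Finset.mem_Ico, Finset.mem_singleton]
  constructor
  · rintro ⟨⟨hx1, hx2⟩, hx3⟩
    exact window_inj hx1 hx2 hk1 hk2 (hx3.trans hk3.symm)
  · rintro rfl; exact ⟨⟨hk1, hk2⟩, hk3⟩

lemma cnt_block (d a r L : ℕ) (hr : r < d) :
    ((Finset.Ico a (a + (L + d))).filter (fun k => k % d = r)).card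
      = ((Finset.Ico a (a + L)).filter (fun k => k % d = r)).card + 1 := by
  have hsplit : Finset.Ico a (a + (L + d))
      = Finset.Ico a (a + L) ∪ Finset.Ico (a + L) (a + L + d) := by
    rw [Finset.Ico_union_Ico_eq_Ico (by omega) (by omega)]
    congr 1; omega
  rw [hsplit, Finset.filter_union,
    Finset.card_union_of_disjoint
      (Finset.disjoint_filter_filter (Finset.Ico_disjoint_Ico_consecutive a (a + L) (a + L + d))),
    window_filter_card d (a + L) r hr]

lemma cnt_decomp (d a r s : ℕ) (hr : r < d) : ∀ q : ℕ,
    ((Finset.Ico a (a + (s + q * d))).filter (fun k => k % d = r)).card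
      = ((Finset.Ico a (a + s)).filter (fun k => k % d = r)).card + q := by
  intro q
  induction q with
  | zero => simp
  | succ q ih =>
      have h1 : s + (q + 1) * d = (s + q * d) + d := by ring
      rw [h1, cnt_block d a r (s + q * d) hr, ih]; omega

lemma cnt_self (d a s : ℕ) (h1 : 0 < s) (h2 : s ≤ d) :
    ((Finset.Ico a (a + s)).filter (fun k => k % d = a % d)).card = 1 := by
  rw [Finset.card_eq_one]
  refine ⟨a, ?_⟩
  ext x
  simp only [Finset.mem_filter, Finset.mem_Ico, Finset.mem_singleton]
  constructor
  · rintro ⟨⟨hx1, hx2⟩, hx3⟩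
    exact window_inj hx1 (by omega) (le_refl a) (by omega) hx3
  · rintro rfl; exact ⟨⟨le_rfl, by omega⟩, rfl⟩

lemma cnt_miss (d a s s' : ℕ) (h1 : s ≤ s') (h2 : s' < d) :
    ((Finset.Ico a (a + s)).filter (fun k => k % d = (a + s') % d)).card = 0 := by
  rw [Finset.card_eq_zero, Finset.filter_eq_empty_iff]
  intro x hx
  rw [Finset.mem_Ico] at hx
  intro heq
  have := window_inj (d := d) (a := a) hx.1 (by omega) (show a ≤ a + s' by omega)
    (by omega) heq
  omega


theorem stmt_3 (m n : ℕ) (hm : 0 < m) (hn : 0 < n)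
    (hg : 1 < Nat.gcd (m + 1) (n + 1)) :
    ¬ ∃ (t : ℕ) (c : (K1mn m n).edgeSet → ℕ), 0 < t ∧ IsIntervalColoring (K1mn m n) t c := by
  rintro ⟨t, c, ht, hcol⟩
  classical
  unfold IsIntervalColoring at hcol
  obtain ⟨hrange, hall, hproper, hspec⟩ := hcol
  have main : ∀ d m' n', 2 ≤ d → 1 ≤ m' → 1 ≤ n' →
      m + 1 = d * m' → n + 1 = d * n' → False := by
    intro d m' n' hd2 hm'1 hn'1 hm' hn'
    -- counts at the parts A and B
    have hA : ∀ (x : Fin m) (r : ℕ), r < d →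
        (Finset.univ.filter (fun e : (K1mn m n).edgeSet =>
          (Sum.inr (Sum.inl x) : Fin 1 ⊕ Fin m ⊕ Fin n) ∈
            (e : Sym2 (Fin 1 ⊕ Fin m ⊕ Fin n)) ∧ c e % d = r)).card = n' := by
      intro x r hr
      obtain ⟨a, b, hs⟩ := hspec (Sum.inr (Sum.inl x))
      obtain ⟨a', hcnt⟩ := vertex_count m n c hproper _ a b hs
      rw [hcnt d r]
      have hdeg : (K1mn m n).degree (Sum.inr (Sum.inl x)) = 0 + n' * d := by
        rw [K1mn_degree]
        have hc : n' * d = d * n' := Nat.mul_comm _ _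
        simp only
        linarith
      rw [hdeg, cnt_decomp d a' r 0 hr n']
      simp
    have hB : ∀ (y : Fin n) (r : ℕ), r < d →
        (Finset.univ.filter (fun e : (K1mn m n).edgeSet =>
          (Sum.inr (Sum.inr y) : Fin 1 ⊕ Fin m ⊕ Fin n) ∈
            (e : Sym2 (Fin 1 ⊕ Fin m ⊕ Fin n)) ∧ c e % d = r)).card = m' := by
      intro y r hr
      obtain ⟨a, b, hs⟩ := hspec (Sum.inr (Sum.inr y))
      obtain ⟨a', hcnt⟩ := vertex_count m n c hproper _ a b hs
      rw [hcnt d r]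
      have hdeg : (K1mn m n).degree (Sum.inr (Sum.inr y)) = 0 + m' * d := by
        rw [K1mn_degree]
        have hc : m' * d = d * m' := Nat.mul_comm _ _
        simp only
        linarith
      rw [hdeg, cnt_decomp d a' r 0 hr m']
      simp
    -- the main double-counting identity, for every residue r < d
    have hEq : ∀ r : ℕ, r < d →
        2 * (Finset.univ.filter (fun e : (K1mn m n).edgeSet => c e % d = r)).card
        = (Finset.univ.filter (fun e : (K1mn m n).edgeSet =>
            (Sum.inl 0 : Fin 1 ⊕ Fin m ⊕ Fin n) ∈
              (e : Sym2 (Fin 1 ⊕ Fin m ⊕ Fin n)) ∧ c e % d = r)).card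
          + (m * n' + n * m') := by
      intro r hr
      rw [← handshake m n (fun e => c e % d = r), Fintype.sum_sum_type, Fintype.sum_sum_type,
        Fin.sum_univ_one]
      have h1 : (∑ x : Fin m, (Finset.univ.filter (fun e : (K1mn m n).edgeSet =>
          (Sum.inr (Sum.inl x) : Fin 1 ⊕ Fin m ⊕ Fin n) ∈
            (e : Sym2 (Fin 1 ⊕ Fin m ⊕ Fin n)) ∧ c e % d = r)).card) = m * n' := by
        rw [Finset.sum_congr rfl (fun x _ => hA x r hr), Finset.sum_const, Finset.card_univ,
          Fintype.card_fin, smul_eq_mul]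
      have h2 : (∑ y : Fin n, (Finset.univ.filter (fun e : (K1mn m n).edgeSet =>
          (Sum.inr (Sum.inr y) : Fin 1 ⊕ Fin m ⊕ Fin n) ∈
            (e : Sym2 (Fin 1 ⊕ Fin m ⊕ Fin n)) ∧ c e % d = r)).card) = n * m' := by
        rw [Finset.sum_congr rfl (fun y _ => hB y r hr), Finset.sum_const, Finset.card_univ,
          Fintype.card_fin, smul_eq_mul]
      rw [h1, h2]
    -- spectrum of the center vertex
    obtain ⟨a, b, hs⟩ := hspec (Sum.inl 0)
    obtain ⟨au, hu⟩ := vertex_count m n c hproper (Sum.inl 0) a b hs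
    have hdegu : (K1mn m n).degree (Sum.inl 0) = m + n := by rw [K1mn_degree]
    obtain ⟨M, hM⟩ : ∃ M, m' + n' = M + 1 := ⟨m' + n' - 1, by omega⟩
    have hd0 : 0 < d := by omega
    rcases eq_or_lt_of_le hd2 with hdeq | hd3
    · -- case d = 2
      cases hdeq
      have hmn : m + n = 0 + M * 2 := by omega
      have hucount : (Finset.univ.filter (fun e : (K1mn m n).edgeSet =>
          (Sum.inl 0 : Fin 1 ⊕ Fin m ⊕ Fin n) ∈
            (e : Sym2 (Fin 1 ⊕ Fin m ⊕ Fin n)) ∧ c e % 2 = 0)).card = M := by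
        rw [hu 2 0, hdegu, hmn, cnt_decomp 2 au 0 0 (by norm_num) M]
        simp
      have hE := hEq 0 (by norm_num)
      rw [hucount] at hE
      obtain ⟨m₀, hm₀⟩ : ∃ m₀, m' = m₀ + 1 := ⟨m' - 1, by omega⟩
      obtain ⟨n₀, hn₀⟩ : ∃ n₀, n' = n₀ + 1 := ⟨n' - 1, by omega⟩
      have hmm : m = 2 * m₀ + 1 := by omega
      have hnn : n = 2 * n₀ + 1 := by omega
      have hMM : M = m₀ + n₀ + 1 := by omega
      have hcalc : M + (m * n' + n * m') = 4 * (m₀ * n₀) + 4 * m₀ + 4 * n₀ + 3 := by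
        rw [hmm, hnn, hm₀, hn₀, hMM]; ring
      rw [hcalc] at hE
      generalize m₀ * n₀ = K at hE
      omega
    · -- case d ≥ 3
      obtain ⟨s, hs1, hs2⟩ : ∃ s, d = s + 2 ∧ 1 ≤ s := ⟨d - 2, by omega, by omega⟩
      have e1 : d * m' + d * n' = d * (m' + n') := by ring
      have e2 : d * (m' + n') = d * M + d := by rw [hM]; ring
      have e3 : M * d = d * M := Nat.mul_comm _ _
      have hmn : m + n = s + M * d := by linarith
      have r1lt : au % d < d := Nat.mod_lt _ hd0
      have r2lt : (au + (s + 1)) % d < d := Nat.mod_lt _ hd0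
      have hucount1 : (Finset.univ.filter (fun e : (K1mn m n).edgeSet =>
          (Sum.inl 0 : Fin 1 ⊕ Fin m ⊕ Fin n) ∈
            (e : Sym2 (Fin 1 ⊕ Fin m ⊕ Fin n)) ∧ c e % d = au % d)).card = 1 + M := by
        rw [hu d (au % d), hdegu, hmn, cnt_decomp d au (au % d) s r1lt M,
          cnt_self d au s hs2 (by omega)]
      have hucount2 : (Finset.univ.filter (fun e : (K1mn m n).edgeSet =>
          (Sum.inl 0 : Fin 1 ⊕ Fin m ⊕ Fin n) ∈
            (e : Sym2 (Fin 1 ⊕ Fin m ⊕ Fin n)) ∧ c e % d = (au + (s + 1)) % d)).card = M := by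
        rw [hu d ((au + (s + 1)) % d), hdegu, hmn,
          cnt_decomp d au ((au + (s + 1)) % d) s r2lt M,
          cnt_miss d au s (s + 1) (by omega) (by omega)]
        omega
      have hE1 := hEq (au % d) r1lt
      have hE2 := hEq ((au + (s + 1)) % d) r2lt
      rw [hucount1] at hE1
      rw [hucount2] at hE2
      have hfin : 2 * (Finset.univ.filter
            (fun e : (K1mn m n).edgeSet => c e % d = au % d)).card
          = 2 * (Finset.univ.filter
            (fun e : (K1mn m n).edgeSet => c e % d = (au + (s + 1)) % d)).card + 1 := by
        linarith
      omega
  exact main (Nat.gcd (m + 1) (n + 1))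
    ((m + 1) / Nat.gcd (m + 1) (n + 1)) ((n + 1) / Nat.gcd (m + 1) (n + 1))
    hg
    (by
      have h := Nat.gcd_dvd_left (m + 1) (n + 1)
      have := Nat.div_pos (Nat.le_of_dvd (by omega) h) (by omega)
      omega)
    (by
      have h := Nat.gcd_dvd_right (m + 1) (n + 1)
      have := Nat.div_pos (Nat.le_of_dvd (by omega) h) (by omega)
      omega)
    (by
      have h := Nat.gcd_dvd_left (m + 1) (n + 1)
      exact (Nat.mul_div_cancel' h).symm)
    (by
      have h := Nat.gcd_dvd_right (m + 1) (n + 1)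
      exact (Nat.mul_div_cancel' h).symm)
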